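/- arXiv:2009.06909 — 2 statements merged into one kernel-verified Lean document; each statement's English description precedes it below -/
import Mathlib

section
/- Let u : ℂ → ℂ be an entire function such that ⟨·⟩^{-ε} u ∈ L²(ℂ) for some ε > 0. Then u is a polynomial of degree strictly less than ε - 1; in particular, if 0 < ε ≤ 1 then u = 0. -/
open Complex MeasureTheory Real Set Filter
open scoped ENNReal NNReal Topology


noncomputable def jap (z : ℂ) : ℝ := Real.sqrt (1 + ‖z‖ ^ 2)

lemma jap_one_le (z : ℂ) : 1 ≤ jap z := by
  rw [jap]
  have := Real.sqrt_le_sqrt (show (1:ℝ) ≤ 1 + ‖z‖ ^ 2 from le_add_of_nonneg_right (sq_nonneg _))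
  simpa using this

lemma jap_pos (z : ℂ) : 0 < jap z := lt_of_lt_of_le one_pos (jap_one_le z)

lemma continuous_jap : Continuous jap := by
  exact Real.continuous_sqrt.comp (continuous_const.add (continuous_norm.pow 2))

-- the key real computation for the Hölder split
lemma aux_split (ε a w : ℝ) (n : ℕ) (ha : 0 < a) (hw : 0 ≤ w) :
    (a * ((Real.sqrt (1+a^2)) ^ (-ε) * w)^2) ^ (1/2:ℝ) * ((a^(2*n+1) * (1+a^2)^ε)) ^ (1/2:ℝ)
      = a^(n+1) * w := by
  have h1 : (0:ℝ) < 1 + a^2 := by positivity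
  have hsq : Real.sqrt (1+a^2) ^ (-ε) = (1+a^2) ^ (-(ε/2)) := by
    rw [Real.sqrt_eq_rpow, ← Real.rpow_mul h1.le]
    ring_nf
  have hv : ((1+a^2) ^ (-(ε/2)) * w)^2 = (1+a^2)^(-ε) * w^2 := by
    rw [mul_pow, ← Real.rpow_natCast ((1+a^2) ^ (-(ε/2))) 2, ← Real.rpow_mul h1.le]
    norm_num
  rw [hsq, hv]
  rw [← Real.mul_rpow (by positivity) (by positivity)]
  have : a * ((1+a^2)^(-ε) * w^2) * (a^(2*n+1) * (1+a^2)^ε) = (a^(n+1)*w)^2 * ((1+a^2)^(-ε) * (1+a^2)^ε) := by ring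
  rw [this, ← Real.rpow_add h1, neg_add_cancel, Real.rpow_zero, mul_one,
    ← Real.sqrt_eq_rpow, Real.sqrt_sq (by positivity)]

noncomputable def Kmap : ℝ × ℝ → ℂ := fun p => (p.1 : ℂ) * (Real.cos p.2 + Real.sin p.2 * Complex.I)

lemma continuous_Kmap : Continuous Kmap := by
  unfold Kmap; fun_prop

lemma Kmap_eq_polar (p : ℝ × ℝ) : Complex.polarCoord.symm p = Kmap p := by
  rw [Complex.polarCoord_symm_apply]; rfl

lemma Kmap_circleMap (r θ : ℝ) : Kmap (r, θ) = circleMap 0 r θ := by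
  simp [Kmap, circleMap, Complex.exp_mul_I, ← Complex.ofReal_cos, ← Complex.ofReal_sin]

lemma abs_Kmap (r θ : ℝ) (hr : 0 ≤ r) : ‖Kmap (r, θ)‖ = r := by
  rw [← Kmap_eq_polar, Complex.norm_polarCoord_symm]
  exact abs_of_nonneg hr

lemma lem_fin (g : ℂ → ℂ) (hgc : Continuous g) (hL2 : MemLp g 2 volume)
    (Hg : ℝ × ℝ → ℝ≥0∞) (hHgdef : Hg = fun p => ENNReal.ofReal p.1 * ((‖g (Kmap p)‖₊ : ℝ≥0∞)) ^ 2) :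
    (∫⁻ p in polarCoord.target, Hg p) < ⊤ := by
  set h : ℂ → ℝ≥0∞ := fun z => ((‖g z‖₊ : ℝ≥0∞)) ^ 2 with hh
  have hhm : Measurable h := (measurable_coe_nnreal_ennreal.comp hgc.measurable.nnnorm).pow_const 2
  set h' : ℝ × ℝ → ℝ≥0∞ := fun q => h ((q.1 : ℂ) + (q.2 : ℝ) * Complex.I) with hh'
  have hh'm : Measurable h' := by
    apply hhm.comp
    fun_prop
  have hfin : (∫⁻ z, h z) < ⊤ := by
    have hi := hL2.integrable_norm_rpow two_ne_zero ENNReal.ofNat_ne_top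
    have hfi := hi.hasFiniteIntegral
    rw [HasFiniteIntegral] at hfi
    refine lt_of_le_of_lt (le_of_eq ?_) hfi
    refine lintegral_congr fun z => ?_
    show (‖g z‖ₑ) ^ 2 = ‖‖g z‖ ^ ENNReal.toReal 2‖ₑ
    rw [Real.enorm_eq_ofReal (by positivity), ENNReal.toReal_ofNat, Real.rpow_two,
      ← ofReal_norm, ← ENNReal.ofReal_pow (norm_nonneg _)]
  set B : ℝ × ℝ → ℝ × ℝ →L[ℝ] ℝ × ℝ := fun p =>
    LinearMap.toContinuousLinearMap (Matrix.toLin (Module.Basis.finTwoProd ℝ) (Module.Basis.finTwoProd ℝ)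
      !![Real.cos p.2, -p.1 * Real.sin p.2; Real.sin p.2, p.1 * Real.cos p.2]) with hB
  have hBd : ∀ p ∈ polarCoord.target, HasFDerivWithinAt polarCoord.symm (B p) polarCoord.target p :=
    fun p _ => (hasFDerivAt_polarCoord_symm p).hasFDerivWithinAt
  have hdet : ∀ p : ℝ × ℝ, (B p).det = p.1 := by
    intro p
    conv_rhs => rw [← one_mul p.1, ← Real.cos_sq_add_sin_sq p.2]
    simp only [hB, neg_mul, LinearMap.det_toContinuousLinearMap, LinearMap.det_toLin,
      Matrix.det_fin_two_of, sub_neg_eq_add]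
    ring
  have hcv := lintegral_image_eq_lintegral_abs_det_fderiv_mul volume
    polarCoord.open_target.measurableSet hBd polarCoord.symm.injOn h'
  rw [polarCoord.symm_image_target_eq_source] at hcv
  have heq : (∫⁻ p in polarCoord.target, Hg p)
      = ∫⁻ p in polarCoord.target, ENNReal.ofReal |(B p).det| * h' (polarCoord.symm p) := by
    apply setLIntegral_congr_fun polarCoord.open_target.measurableSet
    refine fun p hp => ?_
    have hp1 : 0 < p.1 := hp.1
    have hz : ((p.1 * Real.cos p.2 : ℝ) : ℂ) + ((p.1 * Real.sin p.2 : ℝ) : ℂ) * Complex.I = Kmap p := by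
      unfold Kmap; push_cast; ring
    simp only [hHgdef, hh', hh, polarCoord_symm_apply, hdet, abs_of_pos hp1, hz]
  calc (∫⁻ p in polarCoord.target, Hg p)
      = ∫⁻ x in polarCoord.source, h' x := by rw [heq, ← hcv]
    _ ≤ ∫⁻ x, h' x := setLIntegral_le_lintegral _ _
    _ = ∫⁻ z, h z := by
        have := Complex.volume_preserving_equiv_real_prod.lintegral_comp hh'm
        rw [← this]
        refine lintegral_congr fun z => ?_
        rw [hh']
        simp [Complex.measurableEquivRealProd_apply]
    _ < ⊤ := hfin

lemma lem_tail (Hg : ℝ×ℝ → ℝ≥0∞) (hHgm : Measurable Hg)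
    (T : ℝ → ℝ≥0∞) (hTdef : T = fun R => ∫⁻ p in Ioi R ×ˢ Ioo (-π) π, Hg p)
    (hT0 : T 0 < ⊤) : Tendsto (fun m : ℕ => T (m:ℝ)) atTop (𝓝 0) := by
  set μ' := volume.withDensity Hg with hμ'
  have hmeas : ∀ R : ℝ, MeasurableSet (Ioi R ×ˢ Ioo (-π) π : Set (ℝ×ℝ)) :=
    fun R => measurableSet_Ioi.prod measurableSet_Ioo
  have hTμ : ∀ R : ℝ, T R = μ' (Ioi R ×ˢ Ioo (-π) π) := by
    intro R; rw [hTdef, hμ', withDensity_apply _ (hmeas R)]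
  have hanti : Antitone (fun m : ℕ => (Ioi (m:ℝ) ×ˢ Ioo (-π) π : Set (ℝ×ℝ))) := by
    intro a b hab
    exact Set.prod_mono (Set.Ioi_subset_Ioi (by exact_mod_cast hab)) subset_rfl
  have hint : (⋂ m : ℕ, (Ioi (m:ℝ) ×ˢ Ioo (-π) π : Set (ℝ×ℝ))) = ∅ := by
    ext p
    simp only [Set.mem_iInter, Set.mem_empty_iff_false, iff_false]
    intro h
    obtain ⟨m, hm⟩ := exists_nat_gt p.1
    exact absurd ((h m).1) (not_lt.2 hm.le)
  have hlim := tendsto_measure_iInter_atTop (μ := μ')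
    (s := fun m : ℕ => Ioi (m:ℝ) ×ˢ Ioo (-π) π)
    (fun m => (hmeas m).nullMeasurableSet) hanti
    ⟨0, by rw [← hTμ]; exact_mod_cast hT0.ne⟩
  rw [hint] at hlim
  simp only [measure_empty] at hlim
  have : (fun m : ℕ => T (m:ℝ)) = μ' ∘ (fun m : ℕ => Ioi (m:ℝ) ×ˢ Ioo (-π) π) := by
    funext m; rw [hTμ]; rfl
  rw [this]
  exact hlim

lemma lem_key (ε : ℝ) (hε : 0 < ε) (u : ℂ → ℂ) (hu : Differentiable ℂ u)
    (g : ℂ → ℂ) (hgnorm : ∀ z, ‖g z‖ = jap z ^ (-ε) * ‖u z‖)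
    (P : FormalMultilinearSeries ℂ ℂ ℂ)
    (hPr : ∀ r : ℝ, 0 < r → cauchyPowerSeries u 0 r = P)
    (Hg : ℝ × ℝ → ℝ≥0∞)
    (hHgdef : Hg = fun p => ENNReal.ofReal p.1 * ((‖g (Kmap p)‖₊ : ℝ≥0∞)) ^ 2)
    (hHgm : Measurable Hg)
    (T : ℝ → ℝ≥0∞) (hTdef : T = fun R => ∫⁻ p in Ioi R ×ˢ Ioo (-π) π, Hg p)
    (htail : Tendsto (fun m : ℕ => T (m:ℝ)) atTop (𝓝 0)) :
    ∀ n : ℕ, ε - 1 ≤ (n:ℝ) → P.coeff n = 0 := by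
  have pi_pos := Real.pi_pos
  intro n hn
  set D : ℝ := 2^(2*n+1) * 5^ε * (2*π) with hD
  have hD0 : 0 < D := by positivity
  set E : ℝ := Real.sqrt D / (2*π) with hE
  have hE0 : 0 ≤ E := by positivity
  have hmain : ∀ δ : ℝ, 0 < δ → ‖P.coeff n‖ ≤ δ * E := by
    intro δ hδ
    have hev : ∀ᶠ m : ℕ in atTop, T (m:ℝ) < ENNReal.ofReal (δ^2) :=
      htail.eventually_lt_const (ENNReal.ofReal_pos.2 (by positivity))
    obtain ⟨m, hm⟩ := (hev.and (eventually_ge_atTop 1)).exists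
    set R : ℝ := (m:ℝ) with hR
    have hm1 : (1:ℝ) ≤ R := by rw [hR]; exact_mod_cast hm.2
    have hmT : T R < ENNReal.ofReal (δ^2) := hm.1
    have hR0 : (0:ℝ) < R := lt_of_lt_of_le one_pos hm1
    -- step 1
    have step1 : ∀ r : ℝ, r ∈ Ioo R (2*R) →
        ENNReal.ofReal (2*π*‖P.coeff n‖ * r^(2*n+1)) ≤
          ∫⁻ θ in Ioo (-π) π, ENNReal.ofReal (r^(n+1)) * (‖u (Kmap (r, θ))‖₊ : ℝ≥0∞) := by
      intro r hr
      have hr0 : 0 < r := lt_trans hR0 hr.1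
      have h3 : ‖P.coeff n‖ ≤ ‖P n‖ := by
        simpa using (P n).le_opNorm 1
      have h2 := norm_cauchyPowerSeries_le u 0 r n
      rw [hPr r hr0, abs_of_pos hr0] at h2
      set M : ℝ := ∫ θ in (0)..(2*π), ‖u (circleMap 0 r θ)‖ with hM
      have h5 : 2*π*‖P.coeff n‖*r^n ≤ M := by
        have h4 : ‖P.coeff n‖ ≤ (2*π)⁻¹ * M * (r⁻¹)^n := le_trans h3 h2
        have hrn : 0 < r^n := pow_pos hr0 n
        have h2π : (0:ℝ) < 2*π := by positivity
        calc 2*π*‖P.coeff n‖*r^n = (2*π*r^n) * ‖P.coeff n‖ := by ring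
          _ ≤ (2*π*r^n) * ((2*π)⁻¹ * M * (r⁻¹)^n) :=
              mul_le_mul_of_nonneg_left h4 (le_of_lt (mul_pos h2π hrn))
          _ = M := by
              rw [show (2*π*r^n) * ((2*π)⁻¹ * M * (r⁻¹)^n) = (2*π*(2*π)⁻¹) * (r^n*(r⁻¹)^n) * M by ring,
                mul_inv_cancel₀ h2π.ne', ← mul_pow, mul_inv_cancel₀ hr0.ne', one_pow, one_mul, one_mul]
      have hper : Function.Periodic (fun θ => ‖u (circleMap 0 r θ)‖) (2*π) := by
        intro θ; simp [periodic_circleMap 0 r θ]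
      have hshift : M = ∫ θ in Ioo (-π) π, ‖u (circleMap 0 r θ)‖ := by
        rw [hM]
        have h := hper.intervalIntegral_add_eq 0 (-π)
        rw [zero_add] at h
        rw [h, show -π + 2*π = π by ring, intervalIntegral.integral_of_le (by linarith),
          integral_Ioc_eq_integral_Ioo]
      have h4 : ENNReal.ofReal M ≤ ∫⁻ θ in Ioo (-π) π, (‖u (Kmap (r, θ))‖₊ : ℝ≥0∞) := by
        rw [hshift]
        calc ENNReal.ofReal (∫ θ in Ioo (-π) π, ‖u (circleMap 0 r θ)‖)
            ≤ (‖∫ θ in Ioo (-π) π, ‖u (circleMap 0 r θ)‖‖₊ : ℝ≥0∞) := Real.ofReal_le_enorm _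
          _ ≤ ∫⁻ θ in Ioo (-π) π, (‖‖u (circleMap 0 r θ)‖‖₊ : ℝ≥0∞) :=
              enorm_integral_le_lintegral_enorm _
          _ = ∫⁻ θ in Ioo (-π) π, (‖u (Kmap (r, θ))‖₊ : ℝ≥0∞) := by
              refine lintegral_congr fun θ => ?_
              rw [nnnorm_norm, Kmap_circleMap]
      calc ENNReal.ofReal (2*π*‖P.coeff n‖ * r^(2*n+1))
          = ENNReal.ofReal (r^(n+1)) * ENNReal.ofReal (2*π*‖P.coeff n‖*r^n) := by
            rw [← ENNReal.ofReal_mul (by positivity)]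
            congr 1
            ring
        _ ≤ ENNReal.ofReal (r^(n+1)) * ∫⁻ θ in Ioo (-π) π, (‖u (Kmap (r, θ))‖₊ : ℝ≥0∞) := by
            gcongr
            exact le_trans (ENNReal.ofReal_le_ofReal h5) h4
        _ = ∫⁻ θ in Ioo (-π) π, ENNReal.ofReal (r^(n+1)) * (‖u (Kmap (r, θ))‖₊ : ℝ≥0∞) :=
            (lintegral_const_mul' _ _ ENNReal.ofReal_ne_top).symm
    -- step 3: integrate in r
    set S : Set (ℝ×ℝ) := Ioo R (2*R) ×ˢ Ioo (-π) π with hS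
    have hSmeas : MeasurableSet S := measurableSet_Ioo.prod measurableSet_Ioo
    set Φ : ℝ×ℝ → ℝ≥0∞ := fun p => ENNReal.ofReal (p.1^(n+1)) * (‖u (Kmap p)‖₊ : ℝ≥0∞) with hΦ
    have hΦm : Measurable Φ := by
      apply Measurable.mul (f := fun p : ℝ×ℝ => ENNReal.ofReal (p.1^(n+1)))
        (g := fun p : ℝ×ℝ => (‖u (Kmap p)‖₊ : ℝ≥0∞))
      · exact ENNReal.measurable_ofReal.comp (measurable_fst.pow_const (n+1))
      · exact measurable_coe_nnreal_ennreal.comp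
          ((hu.continuous.comp continuous_Kmap).measurable.nnnorm)
    have hrestr : (volume : Measure (ℝ×ℝ)).restrict S
        = ((volume : Measure ℝ).restrict (Ioo R (2*R))).prod
            ((volume : Measure ℝ).restrict (Ioo (-π) π)) := by
      rw [hS, Measure.prod_restrict]
      rfl
    have hiter : ∫⁻ p in S, Φ p
        = ∫⁻ r in Ioo R (2*R), ∫⁻ θ in Ioo (-π) π, Φ (r, θ) := by
      rw [hrestr]
      exact lintegral_prod _ (by rw [← hrestr]; exact hΦm.aemeasurable)
    have hlow : ENNReal.ofReal (2*π*‖P.coeff n‖ * R^(2*n+2))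
        ≤ ∫⁻ r in Ioo R (2*R), ENNReal.ofReal (2*π*‖P.coeff n‖ * r^(2*n+1)) := by
      have hvol : volume (Ioo R (2*R)) = ENNReal.ofReal R := by
        rw [Real.volume_Ioo]
        congr 1
        ring
      calc ENNReal.ofReal (2*π*‖P.coeff n‖ * R^(2*n+2))
          = ENNReal.ofReal (2*π*‖P.coeff n‖ * R^(2*n+1)) * volume (Ioo R (2*R)) := by
            rw [hvol, ← ENNReal.ofReal_mul (by positivity)]
            congr 1
            ring
        _ = ∫⁻ _ in Ioo R (2*R), ENNReal.ofReal (2*π*‖P.coeff n‖ * R^(2*n+1)) :=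
            (setLIntegral_const _ _).symm
        _ ≤ ∫⁻ r in Ioo R (2*R), ENNReal.ofReal (2*π*‖P.coeff n‖ * r^(2*n+1)) := by
            apply setLIntegral_mono
              (ENNReal.measurable_ofReal.comp ((measurable_id.pow_const (2*n+1)).const_mul _))
            intro r hr
            show ENNReal.ofReal (2*π*‖P.coeff n‖ * R^(2*n+1))
              ≤ ENNReal.ofReal (2*π*‖P.coeff n‖ * r^(2*n+1))
            apply ENNReal.ofReal_le_ofReal
            have h : R^(2*n+1) ≤ r^(2*n+1) := pow_le_pow_left₀ hR0.le hr.1.le _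
            exact mul_le_mul_of_nonneg_left h (by positivity)
    have hstep3 : ENNReal.ofReal (2*π*‖P.coeff n‖ * R^(2*n+2)) ≤ ∫⁻ p in S, Φ p := by
      refine le_trans hlow ?_
      rw [hiter]
      apply setLIntegral_mono (hΦm.lintegral_prod_right')
      intro r hr
      exact step1 r hr
    -- Hölder
    set W : ℝ×ℝ → ℝ≥0∞ := fun p => ENNReal.ofReal (p.1^(2*n+1) * (1+p.1^2)^ε) with hW
    have hWm : Measurable W := by
      apply ENNReal.measurable_ofReal.comp
      apply Measurable.mul (measurable_fst.pow_const (2*n+1))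
      exact (measurable_const.add (measurable_fst.pow_const 2)).pow measurable_const
    have hsplit : ∀ p ∈ S, Φ p = Hg p ^ (1/2:ℝ) * W p ^ (1/2:ℝ) := by
      intro p hp
      have hp1 : 0 < p.1 := lt_trans hR0 hp.1.1
      have hjap : jap (Kmap p) = Real.sqrt (1 + p.1^2) := by
        rw [jap]
        congr 2
        rw [show Kmap p = Kmap (p.1, p.2) by rfl, abs_Kmap p.1 p.2 hp1.le]
      have hHgp : Hg p = ENNReal.ofReal
          (p.1 * ((Real.sqrt (1+p.1^2)) ^ (-ε) * ‖u (Kmap p)‖)^2) := by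
        rw [hHgdef]
        show ENNReal.ofReal p.1 * ((‖g (Kmap p)‖₊ : ℝ≥0∞))^2 = _
        rw [← enorm_eq_nnnorm, ← ofReal_norm, ← ENNReal.ofReal_pow (norm_nonneg _),
          ← ENNReal.ofReal_mul hp1.le, hgnorm, hjap]
      have hΦp : Φ p = ENNReal.ofReal (p.1^(n+1) * ‖u (Kmap p)‖) := by
        rw [hΦ]
        show ENNReal.ofReal (p.1^(n+1)) * (‖u (Kmap p)‖₊ : ℝ≥0∞) = _
        rw [← enorm_eq_nnnorm, ← ofReal_norm, ← ENNReal.ofReal_mul (by positivity)]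
      rw [hΦp, hHgp, hW,
        ENNReal.ofReal_rpow_of_nonneg (by positivity) (by norm_num),
        ENNReal.ofReal_rpow_of_nonneg (by positivity) (by norm_num),
        ← ENNReal.ofReal_mul (by positivity),
        aux_split ε p.1 (‖u (Kmap p)‖) n hp1 (norm_nonneg _)]
    have hholder : ∫⁻ p in S, Φ p
        ≤ (∫⁻ p in S, Hg p) ^ (1/2:ℝ) * (∫⁻ p in S, W p) ^ (1/2:ℝ) := by
      have hcong : ∫⁻ p in S, Φ p
          = ∫⁻ p in S, Hg p ^ (1/2:ℝ) * W p ^ (1/2:ℝ) :=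
        setLIntegral_congr_fun hSmeas hsplit
      rw [hcong]
      have h2 : Real.HolderConjugate 2 2 := Real.HolderConjugate.two_two
      have hh := ENNReal.lintegral_mul_le_Lp_mul_Lq (volume.restrict S) h2
        (f := fun p => Hg p ^ (1/2:ℝ)) (g := fun p => W p ^ (1/2:ℝ))
        ((hHgm.pow_const _).aemeasurable) ((hWm.pow_const _).aemeasurable)
      calc ∫⁻ p in S, Hg p ^ (1/2:ℝ) * W p ^ (1/2:ℝ)
          ≤ (∫⁻ p in S, (Hg p ^ (1/2:ℝ)) ^ (2:ℝ)) ^ (1/(2:ℝ))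
            * (∫⁻ p in S, (W p ^ (1/2:ℝ)) ^ (2:ℝ)) ^ (1/(2:ℝ)) := hh
        _ = (∫⁻ p in S, Hg p) ^ (1/2:ℝ) * (∫⁻ p in S, W p) ^ (1/2:ℝ) := by
            have e1 : ∀ x : ℝ≥0∞, (x ^ (1/2:ℝ)) ^ (2:ℝ) = x := fun x => by
              rw [← ENNReal.rpow_mul]; norm_num
            simp only [e1]
    -- bounds on the two factors
    have hsub : S ⊆ Ioi R ×ˢ Ioo (-π) π := prod_mono Ioo_subset_Ioi_self subset_rfl
    have hHgbound : ∫⁻ p in S, Hg p ≤ ENNReal.ofReal (δ^2) :=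
      le_trans (lintegral_mono_set hsub) (by rw [hTdef] at hmT; exact hmT.le)
    set cW : ℝ := (2*R)^(2*n+1) * (5*R^2)^ε with hcW
    have hcW0 : 0 < cW := by positivity
    have hWbound : ∫⁻ p in S, W p ≤ ENNReal.ofReal (cW * (R * (2*π))) := by
      have hptw : ∀ p ∈ S, W p ≤ ENNReal.ofReal cW := by
        intro p hp
        have hp1 : 0 < p.1 := lt_trans hR0 hp.1.1
        apply ENNReal.ofReal_le_ofReal
        have h1 : p.1^(2*n+1) ≤ (2*R)^(2*n+1) := pow_le_pow_left₀ hp1.le hp.1.2.le _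
        have h2 : (1+p.1^2)^ε ≤ (5*R^2)^ε := by
          apply Real.rpow_le_rpow (by positivity) _ hε.le
          nlinarith [hp.1.2, hm1, hp1]
        have h3 : (0:ℝ) ≤ (1+p.1^2)^ε := by positivity
        calc p.1^(2*n+1) * (1+p.1^2)^ε ≤ (2*R)^(2*n+1) * (5*R^2)^ε := by
              apply mul_le_mul h1 h2 h3 (by positivity)
          _ = cW := rfl
      have hvolS : volume S = ENNReal.ofReal R * ENNReal.ofReal (2*π) := by
        rw [hS, show (volume : Measure (ℝ×ℝ)) = (volume : Measure ℝ).prod volume from rfl,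
          Measure.prod_prod, Real.volume_Ioo, Real.volume_Ioo]
        congr 1
        · congr 1; ring
        · congr 1; ring
      calc ∫⁻ p in S, W p ≤ ∫⁻ _ in S, ENNReal.ofReal cW := setLIntegral_mono measurable_const hptw
        _ = ENNReal.ofReal cW * volume S := setLIntegral_const _ _
        _ = ENNReal.ofReal (cW * (R * (2*π))) := by
            rw [hvolS, ← ENNReal.ofReal_mul (show (0:ℝ) ≤ R by positivity),
              ← ENNReal.ofReal_mul hcW0.le]
    -- combine
    have hcwid : Real.sqrt (cW * (R * (2*π))) = Real.sqrt D * (R^(n+1) * R^ε) := by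
      rw [← Real.sqrt_sq (show (0:ℝ) ≤ Real.sqrt D * (R^(n+1) * R^ε) by positivity)]
      congr 1
      have hre : (5*R^2)^ε = 5^ε * (R^ε)^2 := by
        rw [Real.mul_rpow (by norm_num) (by positivity)]
        congr 1
        rw [← Real.rpow_natCast R 2, ← Real.rpow_mul hR0.le,
          ← Real.rpow_natCast (R^ε) 2, ← Real.rpow_mul hR0.le]
        ring_nf
      rw [mul_pow, Real.sq_sqrt hD0.le, hcW, hD, hre]
      ring
    have hfinal : 2*π*‖P.coeff n‖ * R^(2*n+2) ≤ δ * (Real.sqrt D * (R^(n+1) * R^ε)) := by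
      have hchain : ENNReal.ofReal (2*π*‖P.coeff n‖ * R^(2*n+2))
          ≤ ENNReal.ofReal (δ * (Real.sqrt D * (R^(n+1) * R^ε))) := by
        calc ENNReal.ofReal (2*π*‖P.coeff n‖ * R^(2*n+2)) ≤ ∫⁻ p in S, Φ p := hstep3
          _ ≤ (∫⁻ p in S, Hg p) ^ (1/2:ℝ) * (∫⁻ p in S, W p) ^ (1/2:ℝ) := hholder
          _ ≤ (ENNReal.ofReal (δ^2)) ^ (1/2:ℝ)
              * (ENNReal.ofReal (cW * (R * (2*π)))) ^ (1/2:ℝ) := by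
              gcongr
          _ = ENNReal.ofReal (δ * (Real.sqrt D * (R^(n+1) * R^ε))) := by
              rw [ENNReal.ofReal_rpow_of_nonneg (by positivity) (by norm_num),
                ENNReal.ofReal_rpow_of_nonneg (by positivity) (by norm_num),
                ← ENNReal.ofReal_mul (by positivity)]
              congr 1
              rw [← Real.sqrt_eq_rpow, ← Real.sqrt_eq_rpow, Real.sqrt_sq hδ.le, hcwid]
      exact (ENNReal.ofReal_le_ofReal_iff (by positivity)).1 hchain
    have hRe : R^ε ≤ R^(n+1) := by
      have h := Real.rpow_le_rpow_of_exponent_le hm1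
        (show ε ≤ ((n+1:ℕ):ℝ) by push_cast; linarith)
      rwa [Real.rpow_natCast] at h
    have h2π : (0:ℝ) < 2*π := by positivity
    have hfin2 : 2*π*‖P.coeff n‖ * (R^(n+1) * R^(n+1))
        ≤ δ * Real.sqrt D * (R^(n+1) * R^(n+1)) := by
      have hid : R^(2*n+2) = R^(n+1) * R^(n+1) := by rw [← pow_add]; congr 1; ring
      calc 2*π*‖P.coeff n‖ * (R^(n+1) * R^(n+1))
          = 2*π*‖P.coeff n‖ * R^(2*n+2) := by rw [hid]
        _ ≤ δ * (Real.sqrt D * (R^(n+1) * R^ε)) := hfinal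
        _ ≤ δ * (Real.sqrt D * (R^(n+1) * R^(n+1))) := by gcongr
        _ = δ * Real.sqrt D * (R^(n+1) * R^(n+1)) := by ring
    have h6 : 2*π*‖P.coeff n‖ ≤ δ * Real.sqrt D :=
      le_of_mul_le_mul_right hfin2 (by positivity)
    have h7 : δ * E = (δ * Real.sqrt D)/(2*π) := by rw [hE]; ring
    rw [h7, le_div_iff₀ h2π]
    linarith
  -- conclude from hmain
  by_contra hne
  have hpos : 0 < ‖P.coeff n‖ := norm_pos_iff.2 hne
  have h1 := hmain (‖P.coeff n‖ / (2*(E+1))) (by positivity)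
  rw [div_mul_eq_mul_div] at h1
  rw [le_div_iff₀ (by positivity)] at h1
  nlinarith

theorem stmt4 (ε : ℝ) (hε : 0 < ε) (u : ℂ → ℂ)
    (hu : Differentiable ℂ u)
    (hL2 : MemLp (fun z => ((jap z ^ (-ε) : ℝ) : ℂ) * u z) 2 volume) :
    (∃ p : Polynomial ℂ, (∀ z, u z = p.eval z) ∧
      ∀ n : ℕ, ε - 1 ≤ (n : ℝ) → p.coeff n = 0) ∧
    (ε ≤ 1 → ∀ z, u z = 0) := by
  have pi_pos := Real.pi_pos
  set g : ℂ → ℂ := fun z => ((jap z ^ (-ε) : ℝ) : ℂ) * u z with hgdef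
  have hgc : Continuous g := by
    apply Continuous.mul _ hu.continuous
    exact Complex.continuous_ofReal.comp
      (continuous_jap.rpow_const (fun z => Or.inl (jap_pos z).ne'))
  have hgnorm : ∀ z, ‖g z‖ = jap z ^ (-ε) * ‖u z‖ := by
    intro z
    rw [hgdef]
    simp only [norm_mul, Complex.norm_real, Real.norm_eq_abs]
    rw [abs_of_pos (Real.rpow_pos_of_pos (jap_pos z) _)]
  -- power series
  set P : FormalMultilinearSeries ℂ ℂ ℂ := cauchyPowerSeries u 0 ((1:ℝ≥0) : ℝ) with hPdef
  have hP : HasFPowerSeriesOnBall u P 0 ⊤ := hu.hasFPowerSeriesOnBall 0 one_pos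
  have hPr : ∀ r : ℝ, 0 < r → cauchyPowerSeries u 0 r = P := by
    intro r hr
    have h1 : HasFPowerSeriesOnBall u (cauchyPowerSeries u 0 (r.toNNReal : ℝ)) 0 ⊤ :=
      hu.hasFPowerSeriesOnBall 0 (Real.toNNReal_pos.2 hr)
    rw [Real.coe_toNNReal r hr.le] at h1
    exact h1.hasFPowerSeriesAt.eq_formalMultilinearSeries hP.hasFPowerSeriesAt
  -- density
  set Hg : ℝ × ℝ → ℝ≥0∞ := fun p => ENNReal.ofReal p.1 * ((‖g (Kmap p)‖₊ : ℝ≥0∞)) ^ 2 with hHgdef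
  have hHgm : Measurable Hg := by
    apply Measurable.mul (f := fun p : ℝ×ℝ => ENNReal.ofReal p.1)
      (g := fun p : ℝ×ℝ => ((‖g (Kmap p)‖₊ : ℝ≥0∞)) ^ 2)
    · exact ENNReal.measurable_ofReal.comp measurable_fst
    · exact ((measurable_coe_nnreal_ennreal.comp (hgc.comp continuous_Kmap).measurable.nnnorm).pow_const 2)
  -- finiteness of full polar integral
  have hTfin : (∫⁻ p in polarCoord.target, Hg p) < ⊤ :=
    lem_fin g hgc hL2 Hg hHgdef
  -- tail tendsto 0
  set T : ℝ → ℝ≥0∞ := fun R => ∫⁻ p in Ioi R ×ˢ Ioo (-π) π, Hg p with hTdef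
  have hT0 : T 0 < ⊤ := by
    rw [hTdef]
    simpa [polarCoord_target] using hTfin
  have htail : Tendsto (fun m : ℕ => T (m:ℝ)) atTop (𝓝 0) :=
    lem_tail Hg hHgm T hTdef hT0
  -- key: coefficients vanish
  have key : ∀ n : ℕ, ε - 1 ≤ (n:ℝ) → P.coeff n = 0 :=
    lem_key ε hε u hu g hgnorm P hPr Hg hHgdef hHgm T hTdef htail
  -- reconstruction
  set N := ⌈ε⌉₊ with hN
  have hNz : ∀ n : ℕ, N ≤ n → P.coeff n = 0 := by
    intro n hn
    apply key
    have : ε ≤ N := Nat.le_ceil ε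
    have : (N:ℝ) ≤ n := Nat.cast_le.2 hn
    linarith [Nat.le_ceil ε]
  set p : Polynomial ℂ := ∑ k ∈ Finset.range N, Polynomial.C (P.coeff k) * Polynomial.X ^ k with hp
  have hcoeff : ∀ n : ℕ, p.coeff n = if n < N then P.coeff n else 0 := by
    intro n
    rw [hp, Polynomial.finset_sum_coeff]
    simp only [Polynomial.coeff_C_mul, Polynomial.coeff_X_pow, mul_ite, mul_one, mul_zero]
    rw [Finset.sum_ite_eq (Finset.range N) n (fun k => P.coeff k)]
    simp [Finset.mem_range]
  have heval : ∀ z, u z = p.eval z := by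
    intro z
    have hsum : HasSum (fun n => z ^ n • P.coeff n) (u z) := by
      have := hP.hasSum (y := z) (by simp)
      simpa [FormalMultilinearSeries.apply_eq_pow_smul_coeff] using this
    have := hsum.tsum_eq
    rw [← this, tsum_eq_sum (s := Finset.range N) (by
      intro n hn
      rw [hNz n (by simpa [Finset.mem_range, not_lt] using hn)]
      simp)]
    rw [hp, Polynomial.eval_finset_sum]
    refine Finset.sum_congr rfl fun k _ => ?_
    rw [Polynomial.eval_mul, Polynomial.eval_C, Polynomial.eval_pow, Polynomial.eval_X,
      smul_eq_mul, mul_comm]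
  constructor
  · refine ⟨p, heval, ?_⟩
    intro n hn
    rw [hcoeff]
    split
    · exact key n hn
    · rfl
  · intro hε1 z
    rw [heval z]
    have : p = 0 := by
      ext n
      rw [hcoeff]
      split
      · refine key n ?_
        have : (0:ℝ) ≤ n := Nat.cast_nonneg n
        linarith
      · rfl
    rw [this]
    simp
end

section
/- For z ∈ ℂ with Im z > 0, define G_r(z) = ∫_ℝ e^{-t²/2}/(z-t) dt, and for Im z < 0 define G_ℓ(z) = ∫_ℝ e^{-t²/2}/(z-t) dt. Both extend to entire functions on ℂ (by analytic continuation across the real axis), and they satisfy G_r(z) - G_ℓ(z) = -2πi e^{-z²/2} for all z ∈ ℂ. -/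
open Complex MeasureTheory Set Real Filter Topology

noncomputable def Jfun (z : ℂ) : ℂ := ∫ s in Ioi (0:ℝ), Complex.exp (-(s:ℂ)^2/2 + I*s*z)

lemma integrable_Jint (z : ℂ) : Integrable (fun s : ℝ => Complex.exp (-(s:ℂ)^2/2 + I*s*z)) := by
  have h : ∀ s : ℝ, -(s:ℂ)^2/2 + I*s*z = -(((1:ℝ)/2 : ℝ):ℂ)*s^2 + (I*z)*s + 0 := by
    intro s; push_cast; ring
  simp only [h]
  exact integrable_cexp_quadratic (by norm_num) _ _

lemma Jint_FT (z : ℂ) : ∫ s : ℝ, Complex.exp (-(s:ℂ)^2/2 + I*s*z)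
    = (Real.sqrt (2*Real.pi) : ℂ) * Complex.exp (-z^2/2) := by
  have h : ∀ s : ℝ, -(s:ℂ)^2/2 + I*s*z = (-(((1:ℝ)/2 : ℝ):ℂ))*s^2 + (I*z)*s + 0 := by
    intro s; push_cast; ring
  simp only [h]
  rw [integral_cexp_quadratic (by norm_num) (I*z) 0]
  congr 1
  · rw [Real.sqrt_eq_rpow, Complex.ofReal_cpow (by positivity)]
    push_cast
    have : ((Real.pi:ℂ) / (1/2 : ℂ)) = 2*(Real.pi:ℂ) := by ring
    rw [neg_neg, this]
  · congr 1
    have : (I*z)^2 = -z^2 := by rw [mul_pow, I_sq]; ring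
    rw [this]
    push_cast
    ring

lemma integral_cexp_Ioi {c : ℂ} (hc : c.re < 0) :
    ∫ s in Ioi (0:ℝ), Complex.exp (c*s) = -c⁻¹ := by
  have hc0 : c ≠ 0 := by contrapose! hc; rw [hc, zero_re]
  have A : ∀ x : ℂ, HasDerivAt (fun w => Complex.exp (c*w)/c) (Complex.exp (c*x)) x := by
    intro x
    have h := (((hasDerivAt_id x).const_mul c).cexp).div_const c
    simp only [id, mul_one] at h
    rwa [mul_div_cancel_right₀ _ hc0] at h
  have hint : IntegrableOn (fun s : ℝ => Complex.exp (c*s)) (Ioi (0:ℝ)) := by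
    refine Integrable.mono' (g := fun s : ℝ => Real.exp (-(-c.re)*s))
      (exp_neg_integrableOn_Ioi 0 (by linarith)) ?_ ?_
    · exact (Complex.continuous_exp.comp (continuous_const.mul continuous_ofReal)).aestronglyMeasurable
    · filter_upwards with s
      simp [Complex.norm_exp, Complex.mul_re]
  have B : Tendsto (fun s : ℝ => Complex.exp (c*s)/c) atTop (𝓝 0) := by
    rw [tendsto_zero_iff_norm_tendsto_zero]
    have h : ∀ s : ℝ, ‖Complex.exp (c*s)/c‖ = Real.exp (c.re*s)/‖c‖ := by
      intro s; simp [Complex.norm_exp, Complex.mul_re]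
    simp only [h]
    rw [show (0:ℝ) = 0/‖c‖ by simp]
    refine Tendsto.div_const ?_ _
    exact Real.tendsto_exp_atBot.comp ((tendsto_const_mul_atBot_of_neg hc).2 tendsto_id)
  have := integral_Ioi_of_hasDerivAt_of_tendsto' (f := fun s : ℝ => Complex.exp (c*s)/c)
    (fun x _ => (A x).comp_ofReal) hint B
  rw [this]
  simp [div_eq_mul_inv]

lemma integrableOn_bound (A : ℝ) :
    IntegrableOn (fun s : ℝ => Real.exp (A^2) * (s * Real.exp (-(1/4:ℝ) * s^2))) (Ioi 0) := by
  have h := (integrableOn_rpow_mul_exp_neg_mul_sq (b := 1/4) (by norm_num) (s := 1) (by norm_num))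
  simp only [Real.rpow_one] at h
  exact h.const_mul _

lemma bound_le {A : ℝ} (hA : 0 ≤ A) {s : ℝ} (hs : 0 < s) {z : ℂ} (hz : -z.im ≤ A) :
    ‖Complex.exp (-(s:ℂ)^2/2 + I*s*z) * (I*s)‖
      ≤ Real.exp (A^2) * (s * Real.exp (-(1/4:ℝ) * s^2)) := by
  have h1 : ‖Complex.exp (-(s:ℂ)^2/2 + I*s*z) * (I*s)‖
      = Real.exp (-s^2/2 - s*z.im) * s := by
    have e0 : -(s:ℂ)^2/2 + I*s*z = ((-s^2/2 : ℝ) : ℂ) + ((s:ℂ)*z)*I := by push_cast; ring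
    have e1 : ‖(I : ℂ)*s‖ = s := by
      simp [abs_of_pos hs]
    have e2 : ‖Complex.exp (-(s:ℂ)^2/2 + I*s*z)‖ = Real.exp (-s^2/2 - s*z.im) := by
      rw [Complex.norm_exp, e0]
      congr 1
      simp [Complex.mul_I_re, ← Complex.ofReal_pow]
      ring
    rw [norm_mul, e1, e2]
  rw [h1]
  have h2 : -s^2/2 - s*z.im ≤ -(1/4)*s^2 + A^2 := by
    nlinarith [sq_nonneg (s/2 - A), mul_le_mul_of_nonneg_left hz hs.le]
  calc Real.exp (-s^2/2 - s*z.im) * s ≤ Real.exp (-(1/4)*s^2 + A^2) * s := by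
        exact mul_le_mul_of_nonneg_right (Real.exp_le_exp.2 h2) hs.le
    _ = Real.exp (A^2) * (s * Real.exp (-(1/4:ℝ) * s^2)) := by
        rw [Real.exp_add]; ring

lemma differentiable_Jfun : Differentiable ℂ Jfun := by
  intro z₀
  set A : ℝ := |z₀.im| + 1 with hA
  have key := hasDerivAt_integral_of_dominated_loc_of_deriv_le
    (F := fun (z : ℂ) (s : ℝ) => Complex.exp (-(s:ℂ)^2/2 + I*s*z))
    (F' := fun (z : ℂ) (s : ℝ) => Complex.exp (-(s:ℂ)^2/2 + I*s*z) * (I*s))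
    (μ := volume.restrict (Ioi (0:ℝ))) (x₀ := z₀)
    (bound := fun s : ℝ => Real.exp (A^2) * (s * Real.exp (-(1/4:ℝ) * s^2)))
    (s := Metric.ball z₀ 1) (Metric.ball_mem_nhds z₀ one_pos) ?_ ((integrable_Jint z₀).integrableOn) ?_ ?_ (integrableOn_bound A) ?_
  · exact (HasDerivAt.differentiableAt key.2).congr_of_eventuallyEq (by rfl)
  · filter_upwards with z
    exact ((Complex.continuous_exp.comp (by continuity)).aestronglyMeasurable).restrict
  · exact ((Complex.continuous_exp.comp (by continuity)).mul (by continuity)).aestronglyMeasurable.restrict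
  · filter_upwards [ae_restrict_mem measurableSet_Ioi] with s hs z hz
    refine bound_le (by positivity) hs ?_
    have h1 : |z.im - z₀.im| ≤ ‖z - z₀‖ := by
      simpa using Complex.abs_im_le_norm (z - z₀)
    have h2 : ‖z - z₀‖ < 1 := by simpa [dist_eq_norm] using hz
    have := abs_le.1 h1
    have := neg_abs_le z₀.im
    have := abs_le.1 (le_refl |z₀.im|)
    simp only [hA]
    nlinarith [neg_le_abs z.im, abs_sub_abs_le_abs_sub z.im z₀.im,
      abs_le.1 h1]
  · filter_upwards with s z hz
    have : HasDerivAt (fun z : ℂ => -(s:ℂ)^2/2 + I*s*z) (I*s) z := by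
      have h := (hasDerivAt_const z (-(s:ℂ)^2/2)).add ((hasDerivAt_id z).const_mul (I*(s:ℂ)))
      simp only [zero_add, mul_one] at h
      exact h
    exact this.cexp

lemma sqrt_two_pi_cpow : ((Real.pi : ℂ) / (((1:ℝ)/2 : ℝ) : ℂ)) ^ ((1:ℂ)/2)
    = (Real.sqrt (2*Real.pi) : ℂ) := by
  rw [Real.sqrt_eq_rpow, Complex.ofReal_cpow (by positivity)]
  push_cast
  have : ((Real.pi:ℂ) / (1/2 : ℂ)) = 2*(Real.pi:ℂ) := by ring
  rw [this]

lemma rep_pointwise (z : ℂ) (s : ℝ) :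
    (Real.sqrt (2*Real.pi) : ℂ) * Complex.exp (-(s:ℂ)^2/2 + I*s*z)
      = ∫ t : ℝ, Complex.exp (-(t:ℂ)^2/2 + I*s*(z - t)) := by
  have h : ∀ t : ℝ, -(t:ℂ)^2/2 + I*s*(z - t)
      = (-(((1:ℝ)/2 : ℝ):ℂ))*t^2 + (-(I*s))*t + (I*s*z) := by
    intro t; push_cast; ring
  simp only [h]
  rw [integral_cexp_quadratic (by norm_num) _ _, neg_neg, sqrt_two_pi_cpow]
  congr 1
  have : (-(I*(s:ℂ)))^2 = -(s:ℂ)^2 := by rw [neg_pow, mul_pow, I_sq]; ring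
  rw [this]
  push_cast
  ring

lemma rep_pointwise' (z : ℂ) (s : ℝ) :
    (Real.sqrt (2*Real.pi) : ℂ) * Complex.exp (-(s:ℂ)^2/2 + I*s*(-z))
      = ∫ t : ℝ, Complex.exp (-(t:ℂ)^2/2 + (-(I*s))*(z - t)) := by
  have h : ∀ t : ℝ, -(t:ℂ)^2/2 + (-(I*s))*(z - t)
      = (-(((1:ℝ)/2 : ℝ):ℂ))*t^2 + (I*s)*t + (-(I*s*z)) := by
    intro t; push_cast; ring
  simp only [h]
  rw [integral_cexp_quadratic (by norm_num) _ _, neg_neg, sqrt_two_pi_cpow]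
  congr 1
  have : ((I*(s:ℂ)))^2 = -(s:ℂ)^2 := by rw [mul_pow, I_sq]; ring
  rw [this]
  push_cast
  ring

lemma norm_aux (z : ℂ) (s t : ℝ) : ‖Complex.exp (-(t:ℂ)^2/2 + I*s*(z - t))‖
    = Real.exp (-z.im * s) * Real.exp (-(1/2:ℝ) * t^2) := by
  rw [Complex.norm_exp, ← Real.exp_add]
  congr 1
  have h : -(t:ℂ)^2/2 + I*s*(z - t) = ((-(1/2)*t^2 : ℝ) : ℂ) + ((s:ℂ)*(z - t))*I := by
    push_cast; ring
  rw [h]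
  simp [Complex.mul_I_re, ← Complex.ofReal_pow]
  ring

lemma norm_aux' (z : ℂ) (s t : ℝ) : ‖Complex.exp (-(t:ℂ)^2/2 + (-(I*s))*(z - t))‖
    = Real.exp (z.im * s) * Real.exp (-(1/2:ℝ) * t^2) := by
  rw [Complex.norm_exp, ← Real.exp_add]
  congr 1
  have h : -(t:ℂ)^2/2 + (-(I*s))*(z - t) = ((-(1/2)*t^2 : ℝ) : ℂ) + (-((s:ℂ)*(z - t)))*I := by
    push_cast; ring
  rw [h]
  simp [Complex.mul_I_re, ← Complex.ofReal_pow]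
  ring

lemma fubini_int {z : ℂ} (hz : 0 < z.im) :
    Integrable (Function.uncurry fun (s t : ℝ) => Complex.exp (-(t:ℂ)^2/2 + I*s*(z - t)))
      ((volume.restrict (Ioi (0:ℝ))).prod volume) := by
  refine Integrable.mono'
    (g := fun p : ℝ × ℝ => Real.exp (-z.im * p.1) * Real.exp (-(1/2:ℝ) * p.2^2)) ?_ ?_ ?_
  · exact Integrable.mul_prod (exp_neg_integrableOn_Ioi 0 hz)
      (integrable_exp_neg_mul_sq (by norm_num))
  · refine (Complex.continuous_exp.comp ?_).aestronglyMeasurable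
    continuity
  · filter_upwards with p
    rw [Function.uncurry]
    exact le_of_eq (norm_aux z p.1 p.2)

lemma fubini_int' {z : ℂ} (hz : z.im < 0) :
    Integrable (Function.uncurry fun (s t : ℝ) => Complex.exp (-(t:ℂ)^2/2 + (-(I*s))*(z - t)))
      ((volume.restrict (Ioi (0:ℝ))).prod volume) := by
  refine Integrable.mono'
    (g := fun p : ℝ × ℝ => Real.exp (-(-z.im) * p.1) * Real.exp (-(1/2:ℝ) * p.2^2)) ?_ ?_ ?_
  · exact Integrable.mul_prod (exp_neg_integrableOn_Ioi 0 (by linarith))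
      (integrable_exp_neg_mul_sq (by norm_num))
  · refine (Complex.continuous_exp.comp ?_).aestronglyMeasurable
    continuity
  · filter_upwards with p
    rw [Function.uncurry]
    refine le_of_eq ?_
    rw [norm_aux' z p.1 p.2]
    ring_nf

lemma Gr_rep {z : ℂ} (hz : 0 < z.im) :
    (Real.sqrt (2*Real.pi) : ℂ) * Jfun z
      = ∫ t : ℝ, Complex.exp (-(t:ℂ)^2/2) * (I * (z - t)⁻¹) := by
  rw [Jfun, ← integral_const_mul]
  calc ∫ s in Ioi (0:ℝ), (Real.sqrt (2*Real.pi) : ℂ) * Complex.exp (-(s:ℂ)^2/2 + I*s*z)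
      = ∫ s in Ioi (0:ℝ), ∫ t : ℝ, Complex.exp (-(t:ℂ)^2/2 + I*s*(z - t)) := by
        simp only [rep_pointwise z]
    _ = ∫ t : ℝ, ∫ s in Ioi (0:ℝ), Complex.exp (-(t:ℂ)^2/2 + I*s*(z - t)) := by
        exact integral_integral_swap (fubini_int hz)
    _ = ∫ t : ℝ, Complex.exp (-(t:ℂ)^2/2) * (I * (z - t)⁻¹) := by
        refine integral_congr_ae (Filter.Eventually.of_forall fun t => ?_)
        have h1 : ∀ s : ℝ, Complex.exp (-(t:ℂ)^2/2 + I*s*(z - t))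
            = Complex.exp (-(t:ℂ)^2/2) * Complex.exp ((I*(z - t))*s) := by
          intro s; rw [← Complex.exp_add]; ring_nf
        simp only [h1]
        rw [integral_const_mul, integral_cexp_Ioi]
        · congr 1
          rw [mul_inv, Complex.inv_I]
          ring
        · simp [Complex.mul_re]
          exact hz

lemma Gl_rep {z : ℂ} (hz : z.im < 0) :
    (Real.sqrt (2*Real.pi) : ℂ) * Jfun (-z)
      = ∫ t : ℝ, Complex.exp (-(t:ℂ)^2/2) * (-I * (z - t)⁻¹) := by
  rw [Jfun, ← integral_const_mul]
  calc ∫ s in Ioi (0:ℝ), (Real.sqrt (2*Real.pi) : ℂ) * Complex.exp (-(s:ℂ)^2/2 + I*s*(-z))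
      = ∫ s in Ioi (0:ℝ), ∫ t : ℝ, Complex.exp (-(t:ℂ)^2/2 + (-(I*s))*(z - t)) := by
        simp only [rep_pointwise' z]
    _ = ∫ t : ℝ, ∫ s in Ioi (0:ℝ), Complex.exp (-(t:ℂ)^2/2 + (-(I*s))*(z - t)) := by
        exact integral_integral_swap (fubini_int' hz)
    _ = ∫ t : ℝ, Complex.exp (-(t:ℂ)^2/2) * (-I * (z - t)⁻¹) := by
        refine integral_congr_ae (Filter.Eventually.of_forall fun t => ?_)
        have h1 : ∀ s : ℝ, Complex.exp (-(t:ℂ)^2/2 + (-(I*s))*(z - t))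
            = Complex.exp (-(t:ℂ)^2/2) * Complex.exp ((-(I*(z - t)))*s) := by
          intro s; rw [← Complex.exp_add]; ring_nf
        simp only [h1]
        rw [integral_const_mul, integral_cexp_Ioi]
        · congr 1
          rw [inv_neg, neg_neg, mul_inv, Complex.inv_I]
        · simp [Complex.mul_re]
          exact hz

lemma Jfun_neg (z : ℂ) :
    Jfun (-z) = ∫ s in Iic (0:ℝ), Complex.exp (-(s:ℂ)^2/2 + I*s*z) := by
  have h : ∀ s : ℝ, Complex.exp (-(s:ℂ)^2/2 + I*s*(-z))
      = (fun u : ℝ => Complex.exp (-(u:ℂ)^2/2 + I*u*z)) (-s) := by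
    intro s
    simp only []
    congr 1
    push_cast
    ring
  have h2 := integral_comp_neg_Ioi (0:ℝ) (fun u : ℝ => Complex.exp (-(u:ℂ)^2/2 + I*u*z))
  rw [Jfun]
  simp only [Complex.ofReal_neg, neg_neg, neg_zero, mul_neg, neg_mul, neg_sq] at h2 ⊢
  exact h2

theorem stmt16 :
    ∃ Gr Gl : ℂ → ℂ, Differentiable ℂ Gr ∧ Differentiable ℂ Gl ∧
      (∀ z : ℂ, 0 < z.im →
        Gr z = ∫ t : ℝ, Complex.exp (-(t : ℂ) ^ 2 / 2) / (z - (t : ℂ))) ∧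
      (∀ z : ℂ, z.im < 0 →
        Gl z = ∫ t : ℝ, Complex.exp (-(t : ℂ) ^ 2 / 2) / (z - (t : ℂ))) ∧
      ∀ z : ℂ, Gr z - Gl z = -2 * (Real.pi : ℂ) * Complex.I * Complex.exp (-z ^ 2 / 2) := by
  refine ⟨fun z => -I * ((Real.sqrt (2*Real.pi) : ℂ) * Jfun z),
    fun z => I * ((Real.sqrt (2*Real.pi) : ℂ) * Jfun (-z)), ?_, ?_, ?_, ?_, ?_⟩
  · exact (differentiable_Jfun.const_mul _).const_mul _
  · exact ((differentiable_Jfun.comp differentiable_neg).const_mul _).const_mul _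
  · intro z hz
    simp only []
    rw [Gr_rep hz, ← integral_const_mul]
    refine integral_congr_ae (Filter.Eventually.of_forall fun t => ?_)
    simp only [div_eq_mul_inv]
    have : (-I) * I = 1 := by simp [Complex.I_mul_I]
    calc -I * (Complex.exp (-(t:ℂ)^2/2) * (I * (z - t)⁻¹))
        = ((-I) * I) * (Complex.exp (-(t:ℂ)^2/2) * (z - t)⁻¹) := by ring
      _ = Complex.exp (-(t:ℂ)^2/2) * (z - t)⁻¹ := by rw [this, one_mul]
  · intro z hz
    simp only []
    rw [Gl_rep hz, ← integral_const_mul]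
    refine integral_congr_ae (Filter.Eventually.of_forall fun t => ?_)
    simp only [div_eq_mul_inv]
    have : I * (-I) = 1 := by simp [Complex.I_mul_I]
    calc I * (Complex.exp (-(t:ℂ)^2/2) * (-I * (z - t)⁻¹))
        = (I * (-I)) * (Complex.exp (-(t:ℂ)^2/2) * (z - t)⁻¹) := by ring
      _ = Complex.exp (-(t:ℂ)^2/2) * (z - t)⁻¹ := by rw [this, one_mul]
  · intro z
    have hJ : Jfun z + Jfun (-z) = (Real.sqrt (2*Real.pi) : ℂ) * Complex.exp (-z^2/2) := by
      rw [Jfun_neg, ← Jint_FT z, Jfun, add_comm]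
      exact intervalIntegral.integral_Iic_add_Ioi (integrable_Jint z).integrableOn (integrable_Jint z).integrableOn
    have hsq : (Real.sqrt (2*Real.pi) : ℂ) * (Real.sqrt (2*Real.pi) : ℂ) = 2*(Real.pi : ℂ) := by
      rw [← Complex.ofReal_mul, Real.mul_self_sqrt (by positivity)]
      push_cast
      ring
    calc -I * ((Real.sqrt (2*Real.pi) : ℂ) * Jfun z)
          - I * ((Real.sqrt (2*Real.pi) : ℂ) * Jfun (-z))
        = -I * (Real.sqrt (2*Real.pi) : ℂ) * (Jfun z + Jfun (-z)) := by ring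
      _ = -I * ((Real.sqrt (2*Real.pi) : ℂ) * (Real.sqrt (2*Real.pi) : ℂ))
            * Complex.exp (-z^2/2) := by rw [hJ]; ring
      _ = -2 * (Real.pi : ℂ) * Complex.I * Complex.exp (-z ^ 2 / 2) := by rw [hsq]; ring
end
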